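/- Let s ≥ 0. There exists a constant C > 0 depending only on s such that for every real λ ≠ 0 and every absolutely continuous u : ℝ → ℂ with ⟨x⟩^s u ∈ L²(ℝ) and ⟨x⟩^s u' ∈ L²(ℝ), one has ‖u'‖_{L²_s} ≤ (C (1+|λ|) / (|λ| · (min(|λ|,1))^s)) · ‖u' − λu‖_{L²_s}. -/

import Mathlib

open MeasureTheory Real Filter Topology Set

/-- The Japanese bracket `⟨x⟩ = √(1 + x²)`. -/
noncomputable def jap (x : ℝ) : ℝ := Real.sqrt (1 + x ^ 2)

lemma one_add_sq_pos (x : ℝ) : (0:ℝ) < 1 + x ^ 2 := by positivity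

lemma jap_rpow (s x : ℝ) : jap x ^ s = (1 + x ^ 2) ^ (s / 2) := by
  rw [jap, Real.sqrt_eq_rpow, ← Real.rpow_mul (one_add_sq_pos x).le]
  congr 1
  ring

lemma jap_sq (s x : ℝ) : (jap x ^ s) ^ (2:ℕ) = (1 + x ^ 2) ^ s := by
  rw [jap_rpow, ← Real.rpow_natCast ((1+x^2)^(s/2)) 2, ← Real.rpow_mul (one_add_sq_pos x).le]
  norm_num

lemma jap_two_mul (s x : ℝ) : jap x ^ (2*s) = (1 + x ^ 2) ^ s := by
  rw [jap_rpow]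
  congr 1
  ring

lemma re_conj_mul_symm (z w : ℂ) : ((starRingEnd ℂ) z * w).re = ((starRingEnd ℂ) w * z).re := by
  simp [Complex.mul_re]
  ring

lemma re_conj_mul_self (z : ℂ) : ((starRingEnd ℂ) z * z).re = ‖z‖^2 := by
  simp [Complex.sq_norm, Complex.normSq_apply, Complex.mul_re, Complex.conj_re, Complex.conj_im]

lemma norm_add_sq' (z w : ℂ) : ‖z + w‖^2 = ‖z‖^2 + 2*((starRingEnd ℂ) z * w).re + ‖w‖^2 := by
  simp only [Complex.sq_norm, Complex.normSq_apply, Complex.add_re,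
    Complex.add_im, Complex.mul_re, Complex.conj_re, Complex.conj_im]
  ring

lemma norm_sub_smul (lam : ℝ) (z w : ℂ) :
    ‖z - (lam:ℂ) * w‖^2 = ‖z‖^2 - 2*lam*((starRingEnd ℂ) w * z).re + lam^2*‖w‖^2 := by
  simp only [Complex.sq_norm, Complex.normSq_apply, Complex.sub_re,
    Complex.sub_im, Complex.mul_re, Complex.mul_im, Complex.conj_re, Complex.conj_im,
    Complex.ofReal_re, Complex.ofReal_im]
  ring

lemma integrable_conj {μ : Measure ℝ} {g : ℝ → ℂ} (hg : Integrable g μ) :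
    Integrable (fun x => (starRingEnd ℂ) (g x)) μ := by
  refine hg.norm.mono' (Complex.continuous_conj.comp_aestronglyMeasurable hg.aestronglyMeasurable) ?_
  filter_upwards with x
  simp


lemma triangle_identity {a c : ℝ} {g : ℝ → ℂ}
    (hg : IntegrableOn g (Ioc a c)) :
    ∫ x in Ioc a c, ((starRingEnd ℂ) (∫ r in Ioc a x, g r) * g x).re
      = ‖∫ r in Ioc a c, g r‖^2 / 2 := by
  set ν := (volume : Measure ℝ).restrict (Ioc a c) with hν
  have hS : MeasurableSet (Ioc a c) := measurableSet_Ioc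
  have hgν : Integrable g ν := hg
  have hgc : Integrable (fun x => (starRingEnd ℂ) (g x)) ν := integrable_conj hgν
  set T : ℝ × ℝ → ℝ := fun p => ((starRingEnd ℂ) (g p.1) * g p.2).re with hT
  have hK : Integrable (fun p : ℝ × ℝ => (starRingEnd ℂ) (g p.1) * g p.2) (ν.prod ν) :=
    hgc.mul_prod hgν
  have hTi : Integrable T (ν.prod ν) := hK.re
  set V := ∫ r in Ioc a c, g r with hV
  -- total integral
  have htot : ∫ p, T p ∂(ν.prod ν) = ‖V‖^2 := by
    have h2 : ∫ p, T p ∂(ν.prod ν)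
        = (∫ p : ℝ × ℝ, (starRingEnd ℂ) (g p.1) * g p.2 ∂(ν.prod ν)).re := integral_re hK
    have h1 : (∫ p : ℝ × ℝ, (starRingEnd ℂ) (g p.1) * g p.2 ∂(ν.prod ν))
        = (∫ x, (starRingEnd ℂ) (g x) ∂ν) * ∫ x, g x ∂ν :=
      integral_prod_mul (fun x => (starRingEnd ℂ) (g x)) g
    rw [h2, h1, integral_conj]
    exact re_conj_mul_self V
  -- diagonal is null
  have hdiag : (ν.prod ν) {p : ℝ × ℝ | p.1 = p.2} = 0 := by
    have hm : MeasurableSet {p : ℝ × ℝ | p.1 = p.2} :=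
      measurableSet_eq_fun measurable_fst measurable_snd
    rw [Measure.prod_apply hm]
    have hz : ∀ x : ℝ, ν (Prod.mk x ⁻¹' {p : ℝ × ℝ | p.1 = p.2}) = 0 := by
      intro x
      have he : (Prod.mk x ⁻¹' {p : ℝ × ℝ | p.1 = p.2}) = {x} := by
        ext y; simp [eq_comm]
      rw [he, hν, Measure.restrict_apply (measurableSet_singleton x)]
      exact measure_mono_null inter_subset_left Real.volume_singleton
    simp [hz]
  have hae_ne : ∀ᵐ p ∂(ν.prod ν), ¬ (p.1 = p.2) := by
    rw [ae_iff]; simpa using hdiag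
  -- a.e. membership in the square
  have haeS : ∀ᵐ p ∂(ν.prod ν), p ∈ (Ioc a c) ×ˢ (Ioc a c) := by
    rw [hν, Measure.prod_restrict]
    exact ae_restrict_mem (hS.prod hS)
  set B : Set (ℝ × ℝ) := {p | p.2 ≤ p.1} with hB
  have hBm : MeasurableSet B := measurableSet_le measurable_snd measurable_fst
  -- swap symmetry
  have hTsymm : ∀ p : ℝ × ℝ, T (Prod.swap p) = T p := by
    intro p; exact re_conj_mul_symm (g p.2) (g p.1)
  have hIc : ∫ p in Bᶜ, T p ∂(ν.prod ν) = ∫ p in B, T p ∂(ν.prod ν) := by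
    rw [← integral_indicator hBm.compl, ← integral_indicator hBm]
    have h2 : ∫ p, (Bᶜ).indicator T p ∂(ν.prod ν)
        = ∫ p, (Bᶜ).indicator T (Prod.swap p) ∂(ν.prod ν) :=
      (integral_prod_swap (fun p => (Bᶜ).indicator T p)).symm
    rw [h2]
    have h3 : ∀ p : ℝ × ℝ, (Bᶜ).indicator T (Prod.swap p)
        = {q : ℝ × ℝ | q.2 < q.1}.indicator T p := by
      intro p
      by_cases h : p.2 < p.1
      · rw [Set.indicator_of_mem (show p ∈ {q : ℝ × ℝ | q.2 < q.1} from h),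
          Set.indicator_of_mem, hTsymm]
        simp only [hB, Set.mem_compl_iff, Set.mem_setOf_eq, Prod.fst_swap, Prod.snd_swap]
        exact not_le.mpr h
      · rw [Set.indicator_of_notMem (show p ∉ {q : ℝ × ℝ | q.2 < q.1} from h),
          Set.indicator_of_notMem]
        simp only [hB, Set.mem_compl_iff, Set.mem_setOf_eq, Prod.fst_swap, Prod.snd_swap, not_not]
        exact le_of_not_gt h
    simp_rw [h3]
    apply integral_congr_ae
    filter_upwards [hae_ne] with p hp
    by_cases h : p.2 < p.1
    · rw [Set.indicator_of_mem (show p ∈ {q : ℝ × ℝ | q.2 < q.1} from h),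
        Set.indicator_of_mem (show p ∈ B from le_of_lt h)]
    · rw [Set.indicator_of_notMem (show p ∉ {q : ℝ × ℝ | q.2 < q.1} from h),
        Set.indicator_of_notMem]
      intro hpB
      exact hp ((le_of_not_gt h).antisymm hpB)
  have hBhalf : ∫ p in B, T p ∂(ν.prod ν) = ‖V‖^2 / 2 := by
    have hadd := integral_add_compl hBm hTi
    rw [hIc, htot] at hadd
    linarith
  -- iterated integral equals integral over B
  have hiter : ∫ x in Ioc a c, ((starRingEnd ℂ) (∫ r in Ioc a x, g r) * g x).re
      = ∫ p in B, T p ∂(ν.prod ν) := by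
    set A : Set (ℝ × ℝ) := {p | a < p.2 ∧ p.2 ≤ p.1} with hA
    have hAm : MeasurableSet A :=
      (measurableSet_lt measurable_const measurable_snd).inter
        (measurableSet_le measurable_snd measurable_fst)
    have hstep : ∀ x ∈ Ioc a c, ((starRingEnd ℂ) (∫ r in Ioc a x, g r) * g x).re
        = ∫ r, A.indicator T (x, r) ∂ν := by
      intro x hx
      have hsub : Ioc a x ⊆ Ioc a c := Ioc_subset_Ioc le_rfl hx.2
      have h1 : (∫ r in Ioc a x, g r) = ∫ r, (Ioc a x).indicator g r ∂ν := by
        rw [integral_indicator measurableSet_Ioc, hν, Measure.restrict_restrict measurableSet_Ioc,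
          inter_eq_left.mpr hsub]
      rw [h1, ← integral_conj, ← integral_mul_const]
      have h4 : Integrable (fun r => (starRingEnd ℂ) ((Ioc a x).indicator g r) * g x) ν := by
        have : Integrable (fun r => (starRingEnd ℂ) ((Ioc a x).indicator g r)) ν :=
          integrable_conj (hgν.indicator measurableSet_Ioc)
        exact this.mul_const (g x)
      have h5 : (∫ r, (starRingEnd ℂ) ((Ioc a x).indicator g r) * g x ∂ν).re
          = ∫ r, ((starRingEnd ℂ) ((Ioc a x).indicator g r) * g x).re ∂ν :=
        (integral_re h4).symm
      rw [h5]
      apply integral_congr_ae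
      filter_upwards with r
      by_cases hr : r ∈ Ioc a x
      · rw [Set.indicator_of_mem hr]
        have hrA : (x, r) ∈ A := ⟨hr.1, hr.2⟩
        rw [Set.indicator_of_mem hrA]
        exact re_conj_mul_symm (g r) (g x)
      · rw [Set.indicator_of_notMem hr]
        have hrA : (x, r) ∉ A := by
          intro hmem
          exact hr ⟨hmem.1, hmem.2⟩
        rw [Set.indicator_of_notMem hrA]
        simp
    rw [setIntegral_congr_fun hS hstep]
    have hint : Integrable (fun p : ℝ × ℝ => A.indicator T p) (ν.prod ν) :=
      hTi.indicator hAm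
    have h5 : ∫ x, (∫ r, A.indicator T (x, r) ∂ν) ∂ν
        = ∫ p, A.indicator T p ∂(ν.prod ν) := by
      exact integral_integral hint
    rw [h5, ← integral_indicator hBm]
    apply integral_congr_ae
    filter_upwards [haeS] with p hp
    have : p ∈ A ↔ p ∈ B := by
      constructor
      · exact fun h => h.2
      · exact fun h => ⟨hp.2.1, h⟩
    by_cases h : p ∈ A
    · rw [Set.indicator_of_mem h, Set.indicator_of_mem (this.mp h)]
    · rw [Set.indicator_of_notMem h, Set.indicator_of_notMem (fun hb => h (this.mpr hb))]
  rw [hiter, hBhalf]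


lemma integrableOn_bdd_mul {S : Set ℝ} (hS : MeasurableSet S) {φ ψ : ℝ → ℝ}
    (hψ : IntegrableOn ψ S) (hφ : AEStronglyMeasurable φ (volume.restrict S))
    {M : ℝ} (hM : ∀ x ∈ S, ‖φ x‖ ≤ M) :
    IntegrableOn (fun x => φ x * ψ x) S := by
  refine Integrable.mono' (hψ.norm.const_mul M) (hφ.mul hψ.aestronglyMeasurable) ?_
  filter_upwards [ae_restrict_mem hS] with x hx
  rw [norm_mul]
  exact mul_le_mul_of_nonneg_right (hM x hx) (norm_nonneg _)

lemma re_integral_conj_mul {a c : ℝ} (hac : a ≤ c) {u u' : ℝ → ℂ}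
    (hFTC : ∀ x y : ℝ, u y - u x = ∫ t in x..y, u' t)
    (hg : IntegrableOn u' (Ioc a c)) :
    ∫ x in Ioc a c, ((starRingEnd ℂ) (u x) * u' x).re = (‖u c‖^2 - ‖u a‖^2) / 2 := by
  have hS : MeasurableSet (Ioc a c) := measurableSet_Ioc
  set v : ℝ → ℂ := fun x => ∫ r in Ioc a x, u' r with hv
  have hrep : ∀ x ∈ Icc a c, u x = u a + v x := by
    intro x hx
    have h := hFTC a x
    rw [intervalIntegral.integral_of_le hx.1] at h
    rw [hv]
    simp only []
    rw [← h]
    ring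
  set V := ∫ r in Ioc a c, u' r with hV
  have hgIcc : IntegrableOn u' (Icc a c) := by
    rwa [integrableOn_Icc_iff_integrableOn_Ioc]
  have hvcont : ContinuousOn v (Icc a c) := intervalIntegral.continuousOn_primitive hgIcc
  have hvmeas : AEStronglyMeasurable v (volume.restrict (Ioc a c)) :=
    (hvcont.mono Ioc_subset_Icc_self).aestronglyMeasurable hS
  obtain ⟨M, hM⟩ := isCompact_Icc.exists_bound_of_continuousOn hvcont
  have hint1 : Integrable (fun x => ((starRingEnd ℂ) (u a) * u' x).re)
      (volume.restrict (Ioc a c)) := (hg.const_mul _).re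
  have hint2 : Integrable (fun x => ((starRingEnd ℂ) (v x) * u' x).re)
      (volume.restrict (Ioc a c)) := by
    refine Integrable.mono' (hg.norm.const_mul M) ?_ ?_
    · exact Complex.continuous_re.comp_aestronglyMeasurable
        ((Complex.continuous_conj.comp_aestronglyMeasurable hvmeas).mul hg.aestronglyMeasurable)
    · filter_upwards [ae_restrict_mem hS] with x hx
      calc ‖((starRingEnd ℂ) (v x) * u' x).re‖
          ≤ ‖(starRingEnd ℂ) (v x) * u' x‖ := by
            rw [Real.norm_eq_abs]
            exact Complex.abs_re_le_norm _
        _ = ‖v x‖ * ‖u' x‖ := by rw [norm_mul, RCLike.norm_conj]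
        _ ≤ M * ‖u' x‖ := mul_le_mul_of_nonneg_right (hM x (mem_Icc_of_Ioc hx)) (norm_nonneg _)
  have hsplit : ∫ x in Ioc a c, ((starRingEnd ℂ) (u x) * u' x).re
      = (∫ x in Ioc a c, ((starRingEnd ℂ) (u a) * u' x).re)
        + ∫ x in Ioc a c, ((starRingEnd ℂ) (v x) * u' x).re := by
    rw [← integral_add hint1 hint2]
    refine setIntegral_congr_fun hS ?_
    intro x hx
    show ((starRingEnd ℂ) (u x) * u' x).re = _
    rw [hrep x (mem_Icc_of_Ioc hx)]
    simp only [map_add, add_mul, Complex.add_re]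
  have h1 : ∫ x in Ioc a c, ((starRingEnd ℂ) (u a) * u' x).re
      = ((starRingEnd ℂ) (u a) * V).re := by
    have h4 : Integrable (fun x => (starRingEnd ℂ) (u a) * u' x)
        (volume.restrict (Ioc a c)) := hg.const_mul _
    have h5 : ∫ x in Ioc a c, ((starRingEnd ℂ) (u a) * u' x).re
        = (∫ x in Ioc a c, (starRingEnd ℂ) (u a) * u' x).re := integral_re h4
    rw [h5, integral_const_mul]
  have h2 : ∫ x in Ioc a c, ((starRingEnd ℂ) (v x) * u' x).re = ‖V‖^2/2 :=
    triangle_identity hg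
  have hc : u c = u a + V := hrep c (right_mem_Icc.mpr hac)
  rw [hsplit, h1, h2, hc, norm_add_sq']
  ring


lemma weighted_ibp {a b : ℝ} (hab : a ≤ b) {u u' : ℝ → ℂ} {F F' : ℝ → ℝ}
    (hF : ∀ x, HasDerivAt F (F' x) x) (hF'c : Continuous F')
    (hu_cont : Continuous u)
    (hFTC : ∀ x y : ℝ, u y - u x = ∫ t in x..y, u' t)
    (hg : IntegrableOn u' (Ioc a b)) :
    ∫ x in Ioc a b, F x * ((starRingEnd ℂ) (u x) * u' x).re
      = (F b * ‖u b‖^2 - F a * ‖u a‖^2)/2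
        - (1/2) * ∫ x in Ioc a b, F' x * ‖u x‖^2 := by
  have hS : MeasurableSet (Ioc a b) := measurableSet_Ioc
  set ν := (volume : Measure ℝ).restrict (Ioc a b) with hν
  haveI hνfin : IsFiniteMeasure ν := by
    constructor
    rw [hν, Measure.restrict_apply_univ, Real.volume_Ioc]
    exact ENNReal.ofReal_lt_top
  set h : ℝ → ℝ := fun x => ((starRingEnd ℂ) (u x) * u' x).re with hh
  obtain ⟨Mu, hMu⟩ := isCompact_Icc.exists_bound_of_continuousOn
    (hu_cont.continuousOn : ContinuousOn u (Icc a b))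
  have hhi : Integrable h ν := by
    refine Integrable.mono' (hg.norm.const_mul Mu) ?_ ?_
    · exact Complex.continuous_re.comp_aestronglyMeasurable
        (((Complex.continuous_conj.comp hu_cont).aestronglyMeasurable).restrict.mul
          hg.aestronglyMeasurable)
    · filter_upwards [ae_restrict_mem hS] with x hx
      calc ‖h x‖ ≤ ‖(starRingEnd ℂ) (u x) * u' x‖ := by
            rw [hh, Real.norm_eq_abs]
            exact Complex.abs_re_le_norm _
        _ = ‖u x‖ * ‖u' x‖ := by rw [norm_mul, RCLike.norm_conj]
        _ ≤ Mu * ‖u' x‖ := mul_le_mul_of_nonneg_right (hMu x (mem_Icc_of_Ioc hx)) (norm_nonneg _)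
  have hFcont : Continuous F := by
    rw [continuous_iff_continuousAt]
    exact fun x => (hF x).continuousAt
  have hFTCF : ∀ x y : ℝ, ∫ r in x..y, F' r = F y - F x := fun x y =>
    intervalIntegral.integral_eq_sub_of_hasDerivAt (fun t _ => hF t)
      (hF'c.intervalIntegrable x y)
  set A : Set (ℝ × ℝ) := {p | p.1 < p.2 ∧ p.2 ≤ b} with hA
  have hAm : MeasurableSet A := (measurableSet_lt measurable_fst measurable_snd).inter
    (measurableSet_le measurable_snd measurable_const)
  set f : ℝ × ℝ → ℝ := fun p => A.indicator (fun q => F' q.2 * h q.1) p with hf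
  obtain ⟨MF, hMF⟩ := isCompact_Icc.exists_bound_of_continuousOn
    (hF'c.continuousOn : ContinuousOn F' (Icc a b))
  have haeSq : ∀ᵐ p ∂(ν.prod ν), p ∈ (Ioc a b) ×ˢ (Ioc a b) := by
    rw [hν, Measure.prod_restrict]
    exact ae_restrict_mem (hS.prod hS)
  have hMF0 : 0 ≤ MF := le_trans (norm_nonneg _) (hMF a (left_mem_Icc.mpr hab))
  have hfint : Integrable f (ν.prod ν) := by
    refine Integrable.mono' ((hhi.norm.const_mul MF).mul_prod (integrable_const 1)) ?_ ?_
    · exact ((hF'c.comp continuous_snd).aestronglyMeasurable.mul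
        hhi.aestronglyMeasurable.comp_fst).indicator hAm
    · filter_upwards [haeSq] with p hp
      by_cases hpA : p ∈ A
      · rw [hf]
        simp only []
        rw [Set.indicator_of_mem hpA]
        calc ‖F' p.2 * h p.1‖ = ‖F' p.2‖ * ‖h p.1‖ := norm_mul _ _
          _ ≤ MF * ‖h p.1‖ :=
            mul_le_mul_of_nonneg_right (hMF p.2 (mem_Icc_of_Ioc hp.2)) (norm_nonneg _)
          _ = MF * ‖h p.1‖ * 1 := by ring
      · rw [hf]
        simp only []
        rw [Set.indicator_of_notMem hpA]
        simp only [norm_zero]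
        positivity
  have hform1 : ∫ p, f p ∂(ν.prod ν) = ∫ x in Ioc a b, (F b - F x) * h x := by
    have h6 : ∫ x, (∫ r, f (x, r) ∂ν) ∂ν = ∫ p, f p ∂(ν.prod ν) := integral_integral hfint
    rw [← h6]
    refine setIntegral_congr_fun hS ?_
    intro x hx
    show (∫ r, f (x, r) ∂ν) = (F b - F x) * h x
    have h7 : ∀ r, f (x, r) = (Ioc x b).indicator F' r * h x := by
      intro r
      by_cases hr : r ∈ Ioc x b
      · rw [hf]
        simp only []
        rw [Set.indicator_of_mem (show (x,r) ∈ A from ⟨hr.1, hr.2⟩), Set.indicator_of_mem hr]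
      · rw [hf]
        simp only []
        rw [Set.indicator_of_notMem (show (x,r) ∉ A from fun hm => hr ⟨hm.1, hm.2⟩),
          Set.indicator_of_notMem hr, zero_mul]
    simp_rw [h7]
    rw [integral_mul_const]
    have h8 : ∫ r, (Ioc x b).indicator F' r ∂ν = F b - F x := by
      rw [integral_indicator measurableSet_Ioc, hν,
        Measure.restrict_restrict measurableSet_Ioc,
        inter_eq_left.mpr (Ioc_subset_Ioc (le_of_lt hx.1) le_rfl),
        ← intervalIntegral.integral_of_le hx.2]
      exact hFTCF x b
    rw [h8]
  have hform2 : ∫ p, f p ∂(ν.prod ν)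
      = ∫ r in Ioc a b, F' r * ((‖u r‖^2 - ‖u a‖^2)/2) := by
    have h6 : ∫ x, (∫ r, f (x, r) ∂ν) ∂ν = ∫ p, f p ∂(ν.prod ν) := integral_integral hfint
    have h6' : ∫ x, (∫ r, f (x, r) ∂ν) ∂ν = ∫ r, (∫ x, f (x, r) ∂ν) ∂ν :=
      integral_integral_swap hfint
    rw [← h6, h6']
    refine setIntegral_congr_fun hS ?_
    intro r hr
    show (∫ x, f (x, r) ∂ν) = F' r * ((‖u r‖^2 - ‖u a‖^2)/2)
    have h7 : ∀ x, f (x, r) = (Iio r).indicator (fun x => F' r * h x) x := by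
      intro x
      by_cases hx : x < r
      · rw [hf]
        simp only []
        rw [Set.indicator_of_mem (show (x,r) ∈ A from ⟨hx, hr.2⟩),
          Set.indicator_of_mem (show x ∈ Iio r from hx)]
      · rw [hf]
        simp only []
        rw [Set.indicator_of_notMem (show (x,r) ∉ A from fun hm => hx hm.1),
          Set.indicator_of_notMem (show x ∉ Iio r from hx)]
    simp_rw [h7]
    rw [integral_indicator measurableSet_Iio, hν,
      Measure.restrict_restrict measurableSet_Iio]
    have hseteq : Iio r ∩ Ioc a b = Ioo a r := by
      ext x
      constructor
      · rintro ⟨h1, h2, h3⟩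
        exact ⟨h2, h1⟩
      · rintro ⟨h1, h2⟩
        exact ⟨h2, h1, le_trans (le_of_lt h2) hr.2⟩
    rw [hseteq, setIntegral_congr_set Ioo_ae_eq_Ioc, integral_const_mul]
    congr 1
    exact re_integral_conj_mul (le_of_lt hr.1) hFTC
      (hg.mono_set (Ioc_subset_Ioc le_rfl hr.2))
  have hIS : ∫ x in Ioc a b, h x = (‖u b‖^2 - ‖u a‖^2)/2 := re_integral_conj_mul hab hFTC hg
  obtain ⟨MG, hMG⟩ := isCompact_Icc.exists_bound_of_continuousOn
    ((continuous_const.sub hFcont).continuousOn : ContinuousOn (fun x => F b - F x) (Icc a b))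
  have hFbFh_int : Integrable (fun x => (F b - F x) * h x) ν :=
    integrableOn_bdd_mul hS hhi (continuous_const.sub hFcont).aestronglyMeasurable.restrict
      (fun x hx => hMG x (mem_Icc_of_Ioc hx))
  have hsplit : ∫ x in Ioc a b, F x * h x
      = (∫ x in Ioc a b, F b * h x) - ∫ x in Ioc a b, (F b - F x) * h x := by
    rw [← integral_sub (hhi.const_mul (F b)) hFbFh_int]
    refine integral_congr_ae ?_
    filter_upwards with x
    ring
  have hFu2 : Integrable (fun r => F' r * ‖u r‖^2) ν :=
    (hF'c.mul ((hu_cont.norm.pow 2))).integrableOn_Ioc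
  have hFc2 : Integrable F' ν := hF'c.integrableOn_Ioc
  have hthird : ∫ r in Ioc a b, F' r * ((‖u r‖^2 - ‖u a‖^2)/2)
      = (1/2) * (∫ r in Ioc a b, F' r * ‖u r‖^2) - (‖u a‖^2/2) * (F b - F a) := by
    have heq : (fun r => F' r * ((‖u r‖^2 - ‖u a‖^2)/2))
        = fun r => (1/2) * (F' r * ‖u r‖^2) - (‖u a‖^2/2) * F' r := by
      funext r
      ring
    rw [heq, integral_sub (hFu2.const_mul _) (hFc2.const_mul _), integral_const_mul,
      integral_const_mul]
    have h9 : ∫ r in Ioc a b, F' r = F b - F a := by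
      rw [← intervalIntegral.integral_of_le hab]
      exact hFTCF a b
    rw [h9]
  have hDD : ∫ x in Ioc a b, (F b - F x) * h x
      = ∫ r in Ioc a b, F' r * ((‖u r‖^2 - ‖u a‖^2)/2) := hform1.symm.trans hform2
  calc ∫ x in Ioc a b, F x * h x
      = (∫ x in Ioc a b, F b * h x) - ∫ x in Ioc a b, (F b - F x) * h x := hsplit
    _ = F b * ((‖u b‖^2 - ‖u a‖^2)/2)
        - ((1/2) * (∫ r in Ioc a b, F' r * ‖u r‖^2) - (‖u a‖^2/2) * (F b - F a)) := by
        rw [integral_const_mul, hIS, hDD, hthird]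
    _ = (F b * ‖u b‖^2 - F a * ‖u a‖^2)/2 - (1/2) * ∫ x in Ioc a b, F' x * ‖u x‖^2 := by
        ring


lemma exists_seq_top {W : ℝ → ℝ} (hW : Integrable W) (h0 : ∀ x, 0 ≤ W x) :
    ∃ b : ℕ → ℝ, Tendsto b atTop atTop ∧ Tendsto (fun n => W (b n)) atTop (nhds 0)
      ∧ ∀ n : ℕ, (n:ℝ) < b n := by
  have hex : ∀ n : ℕ, ∃ x : ℝ, (n:ℝ) < x ∧ W x < 1/((n:ℝ)+1) := by
    intro n
    by_contra hcon
    push_neg at hcon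
    have hconst : Integrable (fun _ : ℝ => 1/((n:ℝ)+1)) (volume.restrict (Ioi (n:ℝ))) := by
      refine Integrable.mono' hW.restrict aestronglyMeasurable_const ?_
      filter_upwards [ae_restrict_mem measurableSet_Ioi] with x hx
      rw [Real.norm_eq_abs, abs_of_pos (by positivity)]
      exact hcon x hx
    rw [integrable_const_iff] at hconst
    rcases hconst with h | h
    · have hp : (0:ℝ) < 1/((n:ℝ)+1) := by positivity
      rw [h] at hp
      exact lt_irrefl _ hp
    · have h' := h.measure_univ_lt_top
      rw [Measure.restrict_apply_univ, Real.volume_Ioi] at h'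
      exact lt_irrefl _ h'
  choose b hb1 hb2 using hex
  refine ⟨b, ?_, ?_, hb1⟩
  · exact tendsto_atTop_mono (fun n => (hb1 n).le) tendsto_natCast_atTop_atTop
  · exact squeeze_zero (fun n => h0 _) (fun n => (hb2 n).le)
      tendsto_one_div_add_atTop_nhds_zero_nat

lemma exists_seq_bot {W : ℝ → ℝ} (hW : Integrable W) (h0 : ∀ x, 0 ≤ W x) :
    ∃ b : ℕ → ℝ, Tendsto b atTop atBot ∧ Tendsto (fun n => W (b n)) atTop (nhds 0)
      ∧ ∀ n : ℕ, b n < -(n:ℝ) := by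
  have hex : ∀ n : ℕ, ∃ x : ℝ, x < -(n:ℝ) ∧ W x < 1/((n:ℝ)+1) := by
    intro n
    by_contra hcon
    push_neg at hcon
    have hconst : Integrable (fun _ : ℝ => 1/((n:ℝ)+1)) (volume.restrict (Iio (-(n:ℝ)))) := by
      refine Integrable.mono' hW.restrict aestronglyMeasurable_const ?_
      filter_upwards [ae_restrict_mem measurableSet_Iio] with x hx
      rw [Real.norm_eq_abs, abs_of_pos (by positivity)]
      exact hcon x hx
    rw [integrable_const_iff] at hconst
    rcases hconst with h | h
    · have hp : (0:ℝ) < 1/((n:ℝ)+1) := by positivity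
      rw [h] at hp
      exact lt_irrefl _ hp
    · have h' := h.measure_univ_lt_top
      rw [Measure.restrict_apply_univ, Real.volume_Iio] at h'
      exact lt_irrefl _ h'
  choose b hb1 hb2 using hex
  refine ⟨b, ?_, ?_, hb1⟩
  · refine tendsto_atBot_mono (fun n => (hb1 n).le) ?_
    exact tendsto_neg_atBot_iff.mpr tendsto_natCast_atTop_atTop
  · exact squeeze_zero (fun n => h0 _) (fun n => (hb2 n).le)
      tendsto_one_div_add_atTop_nhds_zero_nat

lemma abs_le_rpow_half (x : ℝ) : |x| ≤ (1 + x^2) ^ ((1:ℝ)/2) := by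
  have h1 : |x| = (x^2) ^ ((1:ℝ)/2) := by
    rw [← Real.sqrt_eq_rpow, Real.sqrt_sq_eq_abs]
  rw [h1]
  exact Real.rpow_le_rpow (sq_nonneg x) (by linarith) (by norm_num)

lemma ptF'_bound (t : ℝ) (ht : 0 ≤ t) (x : ℝ) :
    abs (2*x*t*(1+x^2)^(t-1)) ≤ 2*t*(1+x^2)^(t-(1:ℝ)/2) := by
  have hA : (0:ℝ) ≤ (1+x^2)^(t-1) := Real.rpow_nonneg (one_add_sq_pos x).le _
  have h1 : abs (2*x*t*(1+x^2)^(t-1)) = 2 * abs x * t * (1+x^2)^(t-1) := by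
    rw [abs_mul, abs_mul, abs_mul, abs_two, abs_of_nonneg ht, abs_of_nonneg hA]
  rw [h1]
  have h3 : 2 * abs x * t * (1+x^2)^(t-1)
      ≤ 2 * ((1+x^2)^((1:ℝ)/2)) * t * (1+x^2)^(t-1) := by
    have h4 := abs_le_rpow_half x
    have h5 : (0:ℝ) ≤ t * (1+x^2)^(t-1) := mul_nonneg ht hA
    nlinarith [abs_nonneg x]
  refine h3.trans (le_of_eq ?_)
  have h6 : (1+x^2)^((1:ℝ)/2) * (1+x^2)^(t-1) = (1+x^2)^(t-(1:ℝ)/2) := by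
    rw [← Real.rpow_add (one_add_sq_pos x)]
    congr 1
    ring
  calc 2 * ((1+x^2)^((1:ℝ)/2)) * t * (1+x^2)^(t-1)
      = 2 * t * ((1+x^2)^((1:ℝ)/2) * (1+x^2)^(t-1)) := by ring
    _ = 2*t*(1+x^2)^(t-(1:ℝ)/2) := by rw [h6]

lemma core (t lam : ℝ) (ht : 0 ≤ t) {u u' : ℝ → ℂ}
    (hu_cont : Continuous u)
    (hmeas : AEStronglyMeasurable u' volume)
    (hloc : ∀ a b : ℝ, IntegrableOn u' (Ioc a b))
    (hFTC : ∀ x y : ℝ, u y - u x = ∫ r in x..y, u' r)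
    (hu2 : Integrable (fun x : ℝ => (1+x^2)^t * ‖u x‖^2))
    (hu'2 : Integrable (fun x : ℝ => (1+x^2)^t * ‖u' x‖^2)) :
    (∫ x : ℝ, (1+x^2)^t * ‖u' x‖^2) + lam^2 * (∫ x : ℝ, (1+x^2)^t * ‖u x‖^2)
      ≤ (∫ x : ℝ, (1+x^2)^t * ‖u' x - (lam:ℂ) * u x‖^2)
        + 2*(abs lam)*t * ∫ x : ℝ, (1+x^2)^(t-(1:ℝ)/2) * ‖u x‖^2 := by
  have hbase : Continuous (fun x : ℝ => 1 + x^2) := by continuity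
  have hFcont : Continuous (fun x : ℝ => (1+x^2)^t) :=
    hbase.rpow_const fun x => Or.inl (one_add_sq_pos x).ne'
  have hFd : ∀ x : ℝ, HasDerivAt (fun x : ℝ => (1+x^2)^t) (2*x*t*(1+x^2)^(t-1)) x := by
    intro x
    have hinner : HasDerivAt (fun x : ℝ => 1 + x^2) (2*x) x := by
      simpa using ((hasDerivAt_pow 2 x).const_add 1)
    exact hinner.rpow_const (Or.inl (one_add_sq_pos x).ne')
  have hF'c : Continuous (fun x : ℝ => 2*x*t*(1+x^2)^(t-1)) := by
    refine ((continuous_const.mul continuous_id).mul continuous_const).mul ?_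
    exact hbase.rpow_const fun x => Or.inl (one_add_sq_pos x).ne'
  set h : ℝ → ℝ := fun x => ((starRingEnd ℂ) (u x) * u' x).re with hh
  have hmeash : AEStronglyMeasurable h volume :=
    Complex.continuous_re.comp_aestronglyMeasurable
      ((Complex.continuous_conj.comp hu_cont).aestronglyMeasurable.mul hmeas)
  have habs_h : ∀ x, |h x| ≤ ‖u x‖ * ‖u' x‖ := by
    intro x
    calc |h x| ≤ ‖(starRingEnd ℂ) (u x) * u' x‖ := Complex.abs_re_le_norm _
      _ = ‖u x‖ * ‖u' x‖ := by
          rw [norm_mul, RCLike.norm_conj]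
  have hFh : Integrable (fun x : ℝ => (1+x^2)^t * h x) volume := by
    refine Integrable.mono' ((hu2.add hu'2).const_mul (1/2))
      (hFcont.aestronglyMeasurable.mul hmeash) ?_
    filter_upwards with x
    have hF0 : (0:ℝ) ≤ (1+x^2)^t := Real.rpow_nonneg (one_add_sq_pos x).le _
    rw [Real.norm_eq_abs, abs_mul, abs_of_nonneg hF0]
    have h2 : ‖u x‖ * ‖u' x‖ ≤ (‖u x‖^2 + ‖u' x‖^2)/2 := by
      nlinarith [sq_nonneg (‖u x‖ - ‖u' x‖)]
    calc (1+x^2)^t * |h x| ≤ (1+x^2)^t * ((‖u x‖^2 + ‖u' x‖^2)/2) := by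
          exact mul_le_mul_of_nonneg_left ((habs_h x).trans h2) hF0
      _ = 1/2 * ((1+x^2)^t * ‖u x‖^2 + (1+x^2)^t * ‖u' x‖^2) := by ring
  have hF'u2 : Integrable (fun x : ℝ => (2*x*t*(1+x^2)^(t-1)) * ‖u x‖^2) volume := by
    refine Integrable.mono' (hu2.const_mul (2*t))
      ((hF'c.mul (hu_cont.norm.pow 2)).aestronglyMeasurable) ?_
    filter_upwards with x
    rw [Real.norm_eq_abs, abs_mul, abs_of_nonneg (sq_nonneg ‖u x‖ : (0:ℝ) ≤ ‖u x‖^2)]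
    calc abs (2*x*t*(1+x^2)^(t-1)) * ‖u x‖^2 ≤ (2*t*(1+x^2)^(t-(1:ℝ)/2)) * ‖u x‖^2 :=
        mul_le_mul_of_nonneg_right (ptF'_bound t ht x) (sq_nonneg _)
      _ ≤ 2*t*((1+x^2)^t * ‖u x‖^2) := by
        have hle : (1+x^2)^(t-(1:ℝ)/2) ≤ (1+x^2)^t :=
          Real.rpow_le_rpow_of_exponent_le (by nlinarith [sq_nonneg x]) (by linarith)
        have h7 : (1+x^2)^(t-(1:ℝ)/2) * ‖u x‖^2 ≤ (1+x^2)^t * ‖u x‖^2 :=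
          mul_le_mul_of_nonneg_right hle (sq_nonneg _)
        calc (2*t*(1+x^2)^(t-(1:ℝ)/2)) * ‖u x‖^2
            = 2*t*((1+x^2)^(t-(1:ℝ)/2) * ‖u x‖^2) := by ring
          _ ≤ 2*t*((1+x^2)^t * ‖u x‖^2) := by
              exact mul_le_mul_of_nonneg_left h7 (by linarith)
  have hJint : Integrable (fun x : ℝ => (1+x^2)^(t-(1:ℝ)/2) * ‖u x‖^2) volume := by
    refine Integrable.mono' hu2
      (((hbase.rpow_const fun x => Or.inl (one_add_sq_pos x).ne').mul
        (hu_cont.norm.pow 2)).aestronglyMeasurable) ?_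
    filter_upwards with x
    rw [Real.norm_eq_abs, abs_mul,
      abs_of_nonneg (Real.rpow_nonneg (one_add_sq_pos x).le _),
      abs_of_nonneg (sq_nonneg ‖u x‖ : (0:ℝ) ≤ ‖u x‖^2)]
    exact mul_le_mul_of_nonneg_right
      (Real.rpow_le_rpow_of_exponent_le (by nlinarith [sq_nonneg x]) (by linarith))
      (sq_nonneg _)
  -- sequences
  have h0W : ∀ x : ℝ, 0 ≤ (1+x^2)^t * ‖u x‖^2 :=
    fun x => mul_nonneg (Real.rpow_nonneg (one_add_sq_pos x).le _) (sq_nonneg _)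
  obtain ⟨bseq, hbtend, hWb, hbgt⟩ := exists_seq_top hu2 h0W
  obtain ⟨aseq, hatend, hWa, halt⟩ := exists_seq_bot hu2 h0W
  have hab_n : ∀ n : ℕ, aseq n ≤ bseq n := by
    intro n
    have h1 : (0:ℝ) ≤ (n:ℝ) := Nat.cast_nonneg n
    linarith [halt n, hbgt n]
  -- key identity via limits
  have htend1 : Tendsto (fun n => ∫ x in aseq n..bseq n, (1+x^2)^t * h x) atTop
      (𝓝 (∫ x : ℝ, (1+x^2)^t * h x)) :=
    intervalIntegral_tendsto_integral hFh hatend hbtend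
  have htend2 : Tendsto (fun n => ∫ x in aseq n..bseq n, (2*x*t*(1+x^2)^(t-1)) * ‖u x‖^2) atTop
      (𝓝 (∫ x : ℝ, (2*x*t*(1+x^2)^(t-1)) * ‖u x‖^2)) :=
    intervalIntegral_tendsto_integral hF'u2 hatend hbtend
  have hid : ∀ n : ℕ, ∫ x in aseq n..bseq n, (1+x^2)^t * h x
      = ((1+(bseq n)^2)^t * ‖u (bseq n)‖^2 - (1+(aseq n)^2)^t * ‖u (aseq n)‖^2)/2
        - (1/2) * ∫ x in aseq n..bseq n, (2*x*t*(1+x^2)^(t-1)) * ‖u x‖^2 := by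
    intro n
    rw [intervalIntegral.integral_of_le (hab_n n), intervalIntegral.integral_of_le (hab_n n)]
    exact weighted_ibp (hab_n n) hFd hF'c hu_cont hFTC (hloc _ _)
  have htend1' : Tendsto (fun n => ∫ x in aseq n..bseq n, (1+x^2)^t * h x) atTop
      (𝓝 ((0-0)/2 - (1/2) * ∫ x : ℝ, (2*x*t*(1+x^2)^(t-1)) * ‖u x‖^2)) := by
    simp_rw [hid]
    exact ((hWb.sub hWa).div_const 2).sub (htend2.const_mul (1/2))
  have hFh_eq : ∫ x : ℝ, (1+x^2)^t * h x
      = (0-0)/2 - (1/2) * ∫ x : ℝ, (2*x*t*(1+x^2)^(t-1)) * ‖u x‖^2 :=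
    tendsto_nhds_unique htend1 htend1'
  -- bound on the cross term
  have hZbound : abs (∫ x : ℝ, (2*x*t*(1+x^2)^(t-1)) * ‖u x‖^2)
      ≤ 2*t*(∫ x : ℝ, (1+x^2)^(t-(1:ℝ)/2) * ‖u x‖^2) := by
    have h8 := norm_integral_le_integral_norm (μ := (volume : Measure ℝ))
      (fun x : ℝ => (2*x*t*(1+x^2)^(t-1)) * ‖u x‖^2)
    rw [Real.norm_eq_abs] at h8
    refine h8.trans ?_
    have h9 : ∫ x : ℝ, ‖(2*x*t*(1+x^2)^(t-1)) * ‖u x‖^2‖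
        ≤ ∫ x : ℝ, 2*t*((1+x^2)^(t-(1:ℝ)/2) * ‖u x‖^2) := by
      refine integral_mono hF'u2.norm (hJint.const_mul (2*t)) ?_
      intro x
      show ‖(2*x*t*(1+x^2)^(t-1)) * ‖u x‖^2‖ ≤ 2*t*((1+x^2)^(t-(1:ℝ)/2) * ‖u x‖^2)
      rw [Real.norm_eq_abs, abs_mul, abs_of_nonneg (sq_nonneg ‖u x‖ : (0:ℝ) ≤ ‖u x‖^2)]
      calc abs (2*x*t*(1+x^2)^(t-1)) * ‖u x‖^2
          ≤ (2*t*(1+x^2)^(t-(1:ℝ)/2)) * ‖u x‖^2 :=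
            mul_le_mul_of_nonneg_right (ptF'_bound t ht x) (sq_nonneg _)
        _ = 2*t*((1+x^2)^(t-(1:ℝ)/2) * ‖u x‖^2) := by ring
    refine h9.trans (le_of_eq ?_)
    rw [integral_const_mul]
  have hbound : abs (∫ x : ℝ, (1+x^2)^t * h x)
      ≤ t * ∫ x : ℝ, (1+x^2)^(t-(1:ℝ)/2) * ‖u x‖^2 := by
    rw [hFh_eq]
    have h1 : (0-0)/2 - (1/2) * (∫ x : ℝ, (2*x*t*(1+x^2)^(t-1)) * ‖u x‖^2)
        = -((1/2) * ∫ x : ℝ, (2*x*t*(1+x^2)^(t-1)) * ‖u x‖^2) := by ring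
    rw [h1, abs_neg, abs_mul, abs_of_nonneg (by norm_num : (0:ℝ) ≤ 1/2)]
    calc (1/2) * abs (∫ x : ℝ, (2*x*t*(1+x^2)^(t-1)) * ‖u x‖^2)
        ≤ (1/2) * (2*t*(∫ x : ℝ, (1+x^2)^(t-(1:ℝ)/2) * ‖u x‖^2)) :=
          mul_le_mul_of_nonneg_left hZbound (by norm_num)
      _ = t * ∫ x : ℝ, (1+x^2)^(t-(1:ℝ)/2) * ‖u x‖^2 := by ring
  -- pointwise expansion
  have hptid : ∀ x : ℝ, (1+x^2)^t * ‖u' x - (lam:ℂ) * u x‖^2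
      = (1+x^2)^t * ‖u' x‖^2 - (2*lam)*((1+x^2)^t * h x)
        + lam^2*((1+x^2)^t * ‖u x‖^2) := by
    intro x
    have hns := norm_sub_smul lam (u' x) (u x)
    rw [hh]
    simp only []
    rw [hns]
    ring
  have hsplitI : ∫ x : ℝ, (1+x^2)^t * ‖u' x - (lam:ℂ) * u x‖^2
      = (∫ x : ℝ, (1+x^2)^t * ‖u' x‖^2) - (2*lam)*(∫ x : ℝ, (1+x^2)^t * h x)
        + lam^2*(∫ x : ℝ, (1+x^2)^t * ‖u x‖^2) := by
    simp_rw [hptid]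
    have hsub : Integrable (fun x : ℝ => (1+x^2)^t * ‖u' x‖^2 - (2*lam)*((1+x^2)^t * h x))
        volume := hu'2.sub (hFh.const_mul (2*lam))
    rw [integral_add hsub (hu2.const_mul (lam^2)),
      integral_sub hu'2 (hFh.const_mul (2*lam)), integral_const_mul, integral_const_mul]
  have h9 : lam * (∫ x : ℝ, (1+x^2)^t * h x) ≤ abs lam * abs (∫ x : ℝ, (1+x^2)^t * h x) := by
    calc lam * (∫ x : ℝ, (1+x^2)^t * h x) ≤ abs (lam * ∫ x : ℝ, (1+x^2)^t * h x) := le_abs_self _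
      _ = abs lam * abs (∫ x : ℝ, (1+x^2)^t * h x) := abs_mul _ _
  have h10 : abs lam * abs (∫ x : ℝ, (1+x^2)^t * h x)
      ≤ abs lam * (t * ∫ x : ℝ, (1+x^2)^(t-(1:ℝ)/2) * ‖u x‖^2) :=
    mul_le_mul_of_nonneg_left hbound (abs_nonneg lam)
  rw [hsplitI]
  linarith

set_option maxHeartbeats 1000000 in
/-- For `s ≥ 0` there is `C > 0` depending only on `s` such that for every real `λ ≠ 0` and
every absolutely continuous `u` with `⟨x⟩^s u ∈ L²` and `⟨x⟩^s u' ∈ L²`,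
`‖u'‖_{L²_s} ≤ (C (1+|λ|) / (|λ| (min(|λ|,1))^s)) ‖u' − λu‖_{L²_s}`. -/
theorem weighted_derivative_estimate_real_lambda
    (s : ℝ) (hs : 0 ≤ s) :
    ∃ C > 0, ∀ (lam : ℝ), lam ≠ 0 →
      ∀ (u u' : ℝ → ℂ),
        MemLp (fun x => (jap x ^ s : ℝ) • u x) 2 (volume : Measure ℝ) →
        MemLp (fun x => (jap x ^ s : ℝ) • u' x) 2 (volume : Measure ℝ) →
        (∀ x y : ℝ, u y - u x = ∫ t in x..y, u' t) →
        Real.sqrt (∫ x : ℝ, jap x ^ (2 * s) * ‖u' x‖ ^ 2)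
          ≤ C * (1 + |lam|) / (|lam| * (min |lam| 1) ^ s) *
            Real.sqrt (∫ x : ℝ, jap x ^ (2 * s) * ‖u' x - (lam : ℂ) * u x‖ ^ 2) := by
  classical
  have hK0 : (0:ℝ) < 1 + 2*s*(4*s+1)^(2*s) := by positivity
  refine ⟨Real.sqrt (1 + 2*s*(4*s+1)^(2*s)), Real.sqrt_pos.mpr hK0, ?_⟩
  intro lam hlam u u' hu hu' hFTC
  set C := Real.sqrt (1 + 2*s*(4*s+1)^(2*s)) with hCdef
  have hbase : Continuous (fun x : ℝ => 1 + x^2) := by continuity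
  have hw_cont : Continuous (fun x : ℝ => (1+x^2)^(s/2)) :=
    hbase.rpow_const fun x => Or.inl (one_add_sq_pos x).ne'
  have hwpos : ∀ x : ℝ, (0:ℝ) < (1+x^2)^(s/2) :=
    fun x => Real.rpow_pos_of_pos (one_add_sq_pos x) _
  have hy1 : ∀ x : ℝ, (1:ℝ) ≤ 1 + x^2 := fun x => by nlinarith [sq_nonneg x]
  have hw1 : ∀ x : ℝ, (1:ℝ) ≤ (1+x^2)^(s/2) :=
    fun x => Real.one_le_rpow (hy1 x) (by linarith)
  have hjap : ∀ x : ℝ, jap x ^ s = (1+x^2)^(s/2) := jap_rpow s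
  have hjapnn : ∀ x : ℝ, (0:ℝ) ≤ jap x ^ s := fun x => by rw [hjap]; exact (hwpos x).le
  -- weighted integrability
  have hu2 : Integrable (fun x : ℝ => (1+x^2)^s * ‖u x‖^2) volume := by
    have h1 : Integrable (fun x => ‖(jap x ^ s : ℝ) • u x‖^2) volume := hu.norm.integrable_sq
    refine h1.congr ?_
    filter_upwards with x
    rw [norm_smul, Real.norm_eq_abs, abs_of_nonneg (hjapnn x), mul_pow, jap_sq]
  have hu'2 : Integrable (fun x : ℝ => (1+x^2)^s * ‖u' x‖^2) volume := by
    have h1 : Integrable (fun x => ‖(jap x ^ s : ℝ) • u' x‖^2) volume := hu'.norm.integrable_sq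
    refine h1.congr ?_
    filter_upwards with x
    rw [norm_smul, Real.norm_eq_abs, abs_of_nonneg (hjapnn x), mul_pow, jap_sq]
  -- measurability of u'
  have hmeas : AEStronglyMeasurable u' volume := by
    have he : u' = fun x => ((1+x^2)^(s/2))⁻¹ • ((jap x ^ s : ℝ) • u' x) := by
      funext x
      rw [smul_smul, hjap, inv_mul_cancel₀ (hwpos x).ne', one_smul]
    rw [he]
    exact ((hw_cont.inv₀ fun x => (hwpos x).ne').aestronglyMeasurable).smul hu'.aestronglyMeasurable
  have hL2 : MemLp u' 2 volume := by
    refine MemLp.of_le hu' hmeas ?_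
    filter_upwards with x
    rw [norm_smul, Real.norm_eq_abs, abs_of_nonneg (hjapnn x)]
    refine le_mul_of_one_le_left (norm_nonneg _) ?_
    rw [hjap]
    exact hw1 x
  have hloc : ∀ a b : ℝ, IntegrableOn u' (Set.Ioc a b) := by
    intro a b
    haveI : IsFiniteMeasure (volume.restrict (Set.Ioc a b)) := by
      constructor
      rw [Measure.restrict_apply_univ, Real.volume_Ioc]
      exact ENNReal.ofReal_lt_top
    exact memLp_one_iff_integrable.mp
      ((hL2.restrict (Set.Ioc a b)).mono_exponent (by norm_num : (1:ENNReal) ≤ 2))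
  have hIIu' : ∀ a b : ℝ, IntervalIntegrable u' volume a b := fun a b => ⟨hloc a b, hloc b a⟩
  have hu_cont : Continuous u := by
    have he : u = fun y => u 0 + ∫ t in (0:ℝ)..y, u' t := by
      funext y
      have h := hFTC 0 y
      rw [← h]
      ring
    rw [he]
    exact continuous_const.add (intervalIntegral.continuous_primitive hIIu' 0)
  -- unweighted integrability
  have hws : ∀ x : ℝ, (1:ℝ) ≤ (1+x^2)^s := fun x => Real.one_le_rpow (hy1 x) hs
  have hN0 : Integrable (fun x : ℝ => ‖u x‖^2) volume := by
    refine Integrable.mono' hu2 ((hu_cont.norm.pow 2).aestronglyMeasurable) ?_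
    filter_upwards with x
    rw [Real.norm_eq_abs, abs_of_nonneg (sq_nonneg _)]
    nlinarith [sq_nonneg ‖u x‖, hws x]
  have hmeasn' : AEStronglyMeasurable (fun x => ‖u' x‖^2) volume := by
    refine (hmeas.norm.mul hmeas.norm).congr ?_
    filter_upwards with x
    exact (pow_two _).symm
  have hN1 : Integrable (fun x : ℝ => ‖u' x‖^2) volume := by
    refine Integrable.mono' hu'2 hmeasn' ?_
    filter_upwards with x
    rw [Real.norm_eq_abs, abs_of_nonneg (sq_nonneg _)]
    nlinarith [sq_nonneg ‖u' x‖, hws x]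
  -- f = u' - lam u
  have hmeasf : AEStronglyMeasurable (fun x => u' x - (lam:ℂ) * u x) volume :=
    hmeas.sub ((continuous_const.mul hu_cont).aestronglyMeasurable)
  have hfn2 : AEStronglyMeasurable (fun x => ‖u' x - (lam:ℂ) * u x‖^2) volume := by
    refine (hmeasf.norm.mul hmeasf.norm).congr ?_
    filter_upwards with x
    exact (pow_two _).symm
  have hrpowmeas : AEStronglyMeasurable (fun x : ℝ => (1+x^2)^s) volume :=
    (hbase.rpow_const fun x => Or.inl (one_add_sq_pos x).ne').aestronglyMeasurable
  have hIf : Integrable (fun x : ℝ => (1+x^2)^s * ‖u' x - (lam:ℂ) * u x‖^2) volume := by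
    refine Integrable.mono' ((hu'2.const_mul 2).add (hu2.const_mul (2*lam^2)))
      (hrpowmeas.mul hfn2) ?_
    filter_upwards with x
    have hF0 : (0:ℝ) ≤ (1+x^2)^s := Real.rpow_nonneg (one_add_sq_pos x).le _
    rw [Real.norm_eq_abs, abs_mul, abs_of_nonneg hF0, abs_of_nonneg (sq_nonneg _)]
    have h2 : ‖u' x - (lam:ℂ) * u x‖^2 ≤ 2*‖u' x‖^2 + 2*lam^2*‖u x‖^2 := by
      have h3 : ‖u' x - (lam:ℂ) * u x‖ ≤ ‖u' x‖ + abs lam * ‖u x‖ := by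
        calc ‖u' x - (lam:ℂ) * u x‖ ≤ ‖u' x‖ + ‖(lam:ℂ) * u x‖ := norm_sub_le _ _
          _ = ‖u' x‖ + abs lam * ‖u x‖ := by
              rw [norm_mul, Complex.norm_real, Real.norm_eq_abs]
      nlinarith [norm_nonneg (u' x), norm_nonneg (u x), norm_nonneg (u' x - (lam:ℂ)*u x),
        sq_abs lam, sq_nonneg (‖u' x‖ - abs lam * ‖u x‖), abs_nonneg lam]
    calc (1+x^2)^s * ‖u' x - (lam:ℂ) * u x‖^2
        ≤ (1+x^2)^s * (2*‖u' x‖^2 + 2*lam^2*‖u x‖^2) := mul_le_mul_of_nonneg_left h2 hF0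
      _ = 2*((1+x^2)^s*‖u' x‖^2) + 2*lam^2*((1+x^2)^s*‖u x‖^2) := by ring
  have hNf : Integrable (fun x : ℝ => ‖u' x - (lam:ℂ) * u x‖^2) volume := by
    refine Integrable.mono' hIf hfn2 ?_
    filter_upwards with x
    rw [Real.norm_eq_abs, abs_of_nonneg (sq_nonneg _)]
    nlinarith [sq_nonneg ‖u' x - (lam:ℂ) * u x‖, hws x]
  -- core inequalities
  have hcore_s := core s lam hs hu_cont hmeas hloc hFTC hu2 hu'2
  have hu20 : Integrable (fun x : ℝ => (1+x^2)^(0:ℝ) * ‖u x‖^2) volume := by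
    refine hN0.congr ?_
    filter_upwards with x
    rw [Real.rpow_zero, one_mul]
  have hu'20 : Integrable (fun x : ℝ => (1+x^2)^(0:ℝ) * ‖u' x‖^2) volume := by
    refine hN1.congr ?_
    filter_upwards with x
    rw [Real.rpow_zero, one_mul]
  have hcore_0 := core 0 lam le_rfl hu_cont hmeas hloc hFTC hu20 hu'20
  simp only [Real.rpow_zero, one_mul, mul_zero, zero_mul, add_zero] at hcore_0
  -- dominate unweighted f-norm by weighted one
  have hNlf : (∫ x : ℝ, ‖u' x - (lam:ℂ) * u x‖^2)
      ≤ ∫ x : ℝ, (1+x^2)^s * ‖u' x - (lam:ℂ) * u x‖^2 := by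
    refine integral_mono hNf hIf ?_
    intro x
    show ‖u' x - (lam:ℂ) * u x‖^2 ≤ (1+x^2)^s * ‖u' x - (lam:ℂ) * u x‖^2
    nlinarith [sq_nonneg ‖u' x - (lam:ℂ) * u x‖, hws x]
  have hN1nn : (0:ℝ) ≤ ∫ x : ℝ, ‖u' x‖^2 := integral_nonneg fun x => sq_nonneg _
  have hN0b : lam^2 * (∫ x : ℝ, ‖u x‖^2)
      ≤ ∫ x : ℝ, (1+x^2)^s * ‖u' x - (lam:ℂ) * u x‖^2 := by linarith
  -- epsilon splitting
  set m := min (abs lam) 1 with hm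
  have hm0 : 0 < m := lt_min (abs_pos.mpr hlam) one_pos
  have hm1 : m ≤ 1 := min_le_right _ _
  have hmlam : m ≤ abs lam := min_le_left _ _
  set ε := m / (4*s+1) with hε
  have hd0 : (0:ℝ) < 4*s+1 := by linarith
  have hε0 : 0 < ε := div_pos hm0 hd0
  have hpt : ∀ x : ℝ, (1+x^2)^(s-(1:ℝ)/2) * ‖u x‖^2
      ≤ ε * ((1+x^2)^s * ‖u x‖^2) + ε^(-(2*s)) * ‖u x‖^2 := by
    intro x
    have hy0 : (0:ℝ) < 1+x^2 := one_add_sq_pos x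
    set y := (1+x^2)^((1:ℝ)/2) with hydef
    have hy0' : (0:ℝ) < y := Real.rpow_pos_of_pos hy0 _
    have hyge1 : (1:ℝ) ≤ y := Real.one_le_rpow (hy1 x) (by norm_num)
    have ha1 : (1+x^2)^(s-(1:ℝ)/2) = y^(2*s-1) := by
      rw [hydef, ← Real.rpow_mul hy0.le]
      congr 1
      ring
    have ha2 : (1+x^2)^s = y^(2*s) := by
      rw [hydef, ← Real.rpow_mul hy0.le]
      congr 1
      ring
    rw [ha1, ha2]
    by_cases hc : 1/ε ≤ y
    · have hyinv : 1/y ≤ ε := by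
        rw [div_le_iff₀ hy0']
        calc (1:ℝ) = ε * (1/ε) := by field_simp
          _ ≤ ε * y := mul_le_mul_of_nonneg_left hc hε0.le
      have hkey : y^(2*s-1) ≤ ε * y^(2*s) := by
        have he1 : y^(2*s-1) = y^(2*s) * (1/y) := by
          rw [Real.rpow_sub hy0', Real.rpow_one]
          ring
        rw [he1]
        calc y^(2*s) * (1/y) ≤ y^(2*s) * ε :=
            mul_le_mul_of_nonneg_left hyinv (Real.rpow_nonneg hy0'.le _)
          _ = ε * y^(2*s) := by ring
      have h6 := mul_le_mul_of_nonneg_right hkey (sq_nonneg ‖u x‖)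
      have h7 : (0:ℝ) ≤ ε^(-(2*s)) * ‖u x‖^2 :=
        mul_nonneg (Real.rpow_nonneg hε0.le _) (sq_nonneg _)
      have h8 : ε * y^(2*s) * ‖u x‖^2 = ε * (y^(2*s) * ‖u x‖^2) := by ring
      linarith
    · push_neg at hc
      have hk1 : y^(2*s-1) ≤ y^(2*s) :=
        Real.rpow_le_rpow_of_exponent_le hyge1 (by linarith)
      have hk2 : y^(2*s) ≤ (1/ε)^(2*s) :=
        Real.rpow_le_rpow hy0'.le hc.le (by linarith)
      have hk3 : (1/ε)^(2*s) = ε^(-(2*s)) := by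
        rw [one_div, Real.inv_rpow hε0.le, ← Real.rpow_neg hε0.le]
      have h6 := mul_le_mul_of_nonneg_right (hk1.trans (hk2.trans_eq hk3)) (sq_nonneg ‖u x‖)
      have h7 : (0:ℝ) ≤ ε * (y^(2*s) * ‖u x‖^2) := by positivity
      linarith
  -- J integrable
  have hJint : Integrable (fun x : ℝ => (1+x^2)^(s-(1:ℝ)/2) * ‖u x‖^2) volume := by
    refine Integrable.mono' hu2
      (((hbase.rpow_const fun x => Or.inl (one_add_sq_pos x).ne').mul
        (hu_cont.norm.pow 2)).aestronglyMeasurable) ?_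
    filter_upwards with x
    rw [Real.norm_eq_abs, abs_mul,
      abs_of_nonneg (Real.rpow_nonneg (one_add_sq_pos x).le _),
      abs_of_nonneg (sq_nonneg ‖u x‖ : (0:ℝ) ≤ ‖u x‖^2)]
    exact mul_le_mul_of_nonneg_right
      (Real.rpow_le_rpow_of_exponent_le (hy1 x) (by linarith))
      (sq_nonneg _)
  have hJle : (∫ x : ℝ, (1+x^2)^(s-(1:ℝ)/2) * ‖u x‖^2)
      ≤ ε * (∫ x : ℝ, (1+x^2)^s * ‖u x‖^2) + ε^(-(2*s)) * (∫ x : ℝ, ‖u x‖^2) := by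
    have h1 : (∫ x : ℝ, (1+x^2)^(s-(1:ℝ)/2) * ‖u x‖^2)
        ≤ ∫ x : ℝ, ε * ((1+x^2)^s * ‖u x‖^2) + ε^(-(2*s)) * ‖u x‖^2 :=
      integral_mono hJint ((hu2.const_mul ε).add (hN0.const_mul (ε^(-(2*s))))) hpt
    refine h1.trans (le_of_eq ?_)
    rw [integral_add (hu2.const_mul ε) (hN0.const_mul (ε^(-(2*s)))),
      integral_const_mul, integral_const_mul]
  -- combine
  have hI0nn : (0:ℝ) ≤ ∫ x : ℝ, (1+x^2)^s * ‖u x‖^2 :=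
    integral_nonneg fun x => mul_nonneg (Real.rpow_nonneg (one_add_sq_pos x).le _) (sq_nonneg _)
  have hIfnn : (0:ℝ) ≤ ∫ x : ℝ, (1+x^2)^s * ‖u' x - (lam:ℂ) * u x‖^2 :=
    integral_nonneg fun x => mul_nonneg (Real.rpow_nonneg (one_add_sq_pos x).le _) (sq_nonneg _)
  have habs0 : 0 < abs lam := abs_pos.mpr hlam
  have hlam2 : 0 < lam^2 := by nlinarith [sq_abs lam]
  have hεval : ε * (4*s+1) = m := by
    rw [hε]
    field_simp
  have hcoef : 2 * (abs lam) * s * ε ≤ lam^2 := by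
    have h1 : 2*s*ε ≤ m := by nlinarith [hεval, mul_nonneg hs hε0.le, hε0.le]
    calc 2*(abs lam)*s*ε = (abs lam)*(2*s*ε) := by ring
      _ ≤ (abs lam)*m := mul_le_mul_of_nonneg_left h1 habs0.le
      _ ≤ (abs lam)*(abs lam) := mul_le_mul_of_nonneg_left hmlam habs0.le
      _ = lam^2 := by rw [← sq_abs lam]; ring
  have hIc : (∫ x : ℝ, (1+x^2)^s * ‖u' x‖^2) + lam^2 * (∫ x : ℝ, (1+x^2)^s * ‖u x‖^2)
      ≤ (∫ x : ℝ, (1+x^2)^s * ‖u' x - (lam:ℂ) * u x‖^2)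
        + 2*(abs lam)*s * (ε * (∫ x : ℝ, (1+x^2)^s * ‖u x‖^2)
            + ε^(-(2*s)) * (∫ x : ℝ, ‖u x‖^2)) := by
    refine hcore_s.trans ?_
    have h2 : (0:ℝ) ≤ 2*(abs lam)*s := by positivity
    have h3 := mul_le_mul_of_nonneg_left hJle h2
    linarith
  have hstep1 : (∫ x : ℝ, (1+x^2)^s * ‖u' x‖^2)
      ≤ (∫ x : ℝ, (1+x^2)^s * ‖u' x - (lam:ℂ) * u x‖^2)
        + 2*(abs lam)*s*ε^(-(2*s)) * (∫ x : ℝ, ‖u x‖^2) := by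
    have h4 : (2*(abs lam)*s*ε - lam^2) * (∫ x : ℝ, (1+x^2)^s * ‖u x‖^2) ≤ 0 :=
      mul_nonpos_of_nonpos_of_nonneg (by linarith) hI0nn
    nlinarith [hIc]
  have hsε : (0:ℝ) ≤ 2*s*ε^(-(2*s)) := by positivity
  have hstep2 : 2*(abs lam)*s*ε^(-(2*s)) * (∫ x : ℝ, ‖u x‖^2)
      ≤ (2*s*ε^(-(2*s))/(abs lam)) * (∫ x : ℝ, (1+x^2)^s * ‖u' x - (lam:ℂ) * u x‖^2) := by
    have h3 : 2*s*ε^(-(2*s)) * (lam^2 * (∫ x : ℝ, ‖u x‖^2))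
        ≤ 2*s*ε^(-(2*s)) * (∫ x : ℝ, (1+x^2)^s * ‖u' x - (lam:ℂ) * u x‖^2) :=
      mul_le_mul_of_nonneg_left hN0b hsε
    have h4 : 2*(abs lam)*s*ε^(-(2*s)) * (∫ x : ℝ, ‖u x‖^2)
        = (2*s*ε^(-(2*s)) * (lam^2 * (∫ x : ℝ, ‖u x‖^2))) / (abs lam) := by
      rw [eq_div_iff habs0.ne']
      linear_combination (2*s*ε^(-(2*s)) * (∫ x : ℝ, ‖u x‖^2)) * sq_abs lam
    rw [h4, div_le_iff₀ habs0]
    calc 2*s*ε^(-(2*s)) * (lam^2 * (∫ x : ℝ, ‖u x‖^2))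
        ≤ 2*s*ε^(-(2*s)) * (∫ x : ℝ, (1+x^2)^s * ‖u' x - (lam:ℂ) * u x‖^2) := h3
      _ = 2*s*ε^(-(2*s))/(abs lam) * (∫ x : ℝ, (1+x^2)^s * ‖u' x - (lam:ℂ) * u x‖^2)
          * (abs lam) := by
          field_simp
  -- coefficient bound
  have hεpow : ε^(-(2*s)) = (4*s+1)^(2*s) / m^(2*s) := by
    rw [hε, Real.rpow_neg (div_nonneg hm0.le hd0.le), Real.div_rpow hm0.le hd0.le, inv_div]
  have hP : 0 < m^(2*s) := Real.rpow_pos_of_pos hm0 _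
  have hQ : 0 < (4*s+1)^(2*s) := Real.rpow_pos_of_pos hd0 _
  have hm2s1 : m^(2*s) ≤ 1 := Real.rpow_le_one hm0.le hm1 (by linarith)
  have hX1 : 1 ≤ (1+abs lam)^2/(lam^2*m^(2*s)) := by
    rw [le_div_iff₀ (by positivity)]
    nlinarith [sq_abs lam, hm2s1, hlam2, habs0]
  have hX2 : 2*s*ε^(-(2*s))/(abs lam)
      ≤ 2*s*(4*s+1)^(2*s) * ((1+abs lam)^2/(lam^2*m^(2*s))) := by
    rw [hεpow]
    have he1 : 2*s*((4*s+1)^(2*s)/m^(2*s))/(abs lam)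
        = (2*s*(4*s+1)^(2*s))/(m^(2*s)*(abs lam)) := by
      field_simp
    have he2 : 2*s*(4*s+1)^(2*s) * ((1+abs lam)^2/(lam^2*m^(2*s)))
        = (2*s*(4*s+1)^(2*s)*(1+abs lam)^2)/(lam^2*m^(2*s)) := by
      ring
    rw [he1, he2, div_le_div_iff₀ (by positivity) (by positivity)]
    have h5 : lam^2 ≤ (1+abs lam)^2 * (abs lam) := by
      nlinarith [sq_abs lam, habs0, sq_nonneg (abs lam)]
    nlinarith [mul_nonneg (mul_nonneg hs hQ.le) hP.le, hP, h5,
      mul_le_mul_of_nonneg_left h5 (mul_nonneg (mul_nonneg (mul_nonneg (by norm_num : (0:ℝ) ≤ 2) hs) hQ.le) hP.le)]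
  have hchain : (∫ x : ℝ, (1+x^2)^s * ‖u' x‖^2)
      ≤ ((1 + 2*s*(4*s+1)^(2*s)) * ((1+abs lam)^2/(lam^2*m^(2*s))))
        * (∫ x : ℝ, (1+x^2)^s * ‖u' x - (lam:ℂ) * u x‖^2) := by
    have h6 : (∫ x : ℝ, (1+x^2)^s * ‖u' x‖^2)
        ≤ (1 + 2*s*ε^(-(2*s))/(abs lam))
          * (∫ x : ℝ, (1+x^2)^s * ‖u' x - (lam:ℂ) * u x‖^2) := by
      have := hstep1.trans (by linarith [hstep2] :
        (∫ x : ℝ, (1+x^2)^s * ‖u' x - (lam:ℂ) * u x‖^2)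
          + 2*(abs lam)*s*ε^(-(2*s)) * (∫ x : ℝ, ‖u x‖^2)
        ≤ (∫ x : ℝ, (1+x^2)^s * ‖u' x - (lam:ℂ) * u x‖^2)
          + (2*s*ε^(-(2*s))/(abs lam)) * (∫ x : ℝ, (1+x^2)^s * ‖u' x - (lam:ℂ) * u x‖^2))
      nlinarith [this]
    refine h6.trans ?_
    have h7 : (1 + 2*s*ε^(-(2*s))/(abs lam))
        ≤ (1 + 2*s*(4*s+1)^(2*s)) * ((1+abs lam)^2/(lam^2*m^(2*s))) := by
      nlinarith [hX1, hX2]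
    exact mul_le_mul_of_nonneg_right h7 hIfnn
  -- final sqrt manipulation
  have hms2 : (m^s)^2 = m^(2*s) := by
    rw [← Real.rpow_natCast (m^s) 2, ← Real.rpow_mul hm0.le]
    congr 1
    push_cast
    ring
  have hD0 : (0:ℝ) ≤ C*(1+abs lam)/(abs lam * m^s) := by positivity
  have hre : ((1 + 2*s*(4*s+1)^(2*s)) * ((1+abs lam)^2/(lam^2*m^(2*s))))
      = (C*(1+abs lam)/(abs lam*m^s))^2 := by
    rw [div_pow, mul_pow, mul_pow, hCdef, Real.sq_sqrt hK0.le, sq_abs, hms2]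
    ring
  simp_rw [jap_two_mul]
  have hfinal : (∫ x : ℝ, (1+x^2)^s * ‖u' x‖^2)
      ≤ (C*(1+abs lam)/(abs lam*m^s))^2
        * (∫ x : ℝ, (1+x^2)^s * ‖u' x - (lam:ℂ) * u x‖^2) := by
    rw [← hre]
    exact hchain
  calc Real.sqrt (∫ x : ℝ, (1+x^2)^s * ‖u' x‖^2)
      ≤ Real.sqrt ((C*(1+abs lam)/(abs lam*m^s))^2
          * (∫ x : ℝ, (1+x^2)^s * ‖u' x - (lam:ℂ) * u x‖^2)) := Real.sqrt_le_sqrt hfinal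
    _ = C*(1+abs lam)/(abs lam*m^s)
          * Real.sqrt (∫ x : ℝ, (1+x^2)^s * ‖u' x - (lam:ℂ) * u x‖^2) := by
        rw [Real.sqrt_mul (sq_nonneg _), Real.sqrt_sq hD0]
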